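/- Let f : ℕ → ℝ be increasing with f(n) ≥ 1, let t ≥ 1 be such that f(2^t · n) ≥ n · f(n) for all n ≥ 1, and define f'(n) = Σ_{i=0}^{t-1} n^(-i/t) · f(2^i n). Then f'(2n) ≥ (1/2) · n^(1/t) · f'(n) for all n ≥ 1. In particular f'(2n)/f'(n) → ∞ as n → ∞. -/

import Mathlib

theorem f'_ratio_tendsto (f : ℕ → ℝ) (t : ℕ)
    (hmono : ∀ n : ℕ, f n ≤ f (n + 1))
    (hge1 : ∀ n : ℕ, 1 ≤ n → 1 ≤ f n)
    (ht : 1 ≤ t)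
    (hreg : ∀ n : ℕ, 1 ≤ n → (n : ℝ) * f n ≤ f (2 ^ t * n))
    (f' : ℕ → ℝ)
    (hf' : ∀ n : ℕ, f' n = ∑ i ∈ Finset.range t, (n : ℝ) ^ (-(i : ℝ) / (t : ℝ)) * f (2 ^ i * n)) :
    (∀ n : ℕ, 1 ≤ n → (1 / 2) * (n : ℝ) ^ ((1 : ℝ) / (t : ℝ)) * f' n ≤ f' (2 * n)) ∧
      Filter.Tendsto (fun n : ℕ => f' (2 * n) / f' n) Filter.atTop Filter.atTop := by
  have htR : (0:ℝ) < (t:ℝ) := by exact_mod_cast ht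
  have key : ∀ n : ℕ, 1 ≤ n → (1 / 2) * (n : ℝ) ^ ((1 : ℝ) / (t : ℝ)) * f' n ≤ f' (2 * n) := by
    intro n hn
    have hN : (1:ℝ) ≤ (n:ℝ) := by exact_mod_cast hn
    have hN0 : (0:ℝ) < (n:ℝ) := by linarith
    have h2N : (0:ℝ) < 2 * (n:ℝ) := by linarith
    rw [hf', hf', Finset.mul_sum]
    obtain ⟨m, rfl⟩ : ∃ m, t = m + 1 := ⟨t - 1, by omega⟩
    rw [Finset.sum_range_succ' (fun i => 1 / 2 * (n:ℝ) ^ ((1:ℝ) / ((m+1 : ℕ):ℝ)) *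
        ((n:ℝ) ^ (-(i:ℝ) / ((m+1 : ℕ):ℝ)) * f (2 ^ i * n))), Finset.sum_range_succ]
    have hT : ((m+1 : ℕ):ℝ) = (m:ℝ) + 1 := by push_cast; ring
    set T : ℝ := ((m+1 : ℕ):ℝ) with hTdef
    have hT0 : (0:ℝ) < T := htR
    apply add_le_add
    · apply Finset.sum_le_sum
      intro i hi
      have him : i < m := Finset.mem_range.mp hi
      have hcast : ((2 * n : ℕ):ℝ) = 2 * (n:ℝ) := by push_cast; ring
      have hfe : 2 ^ i * (2 * n) = 2 ^ (i + 1) * n := by ring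
      rw [hcast, hfe]
      have hf0 : (0:ℝ) ≤ f (2 ^ (i + 1) * n) := by
        have h1 : 1 ≤ 2 ^ (i+1) * n := Nat.one_le_iff_ne_zero.mpr (by positivity)
        linarith [hge1 _ h1]
      have hpow : 1 / 2 * (n:ℝ) ^ ((1:ℝ)/T) * (n:ℝ) ^ (-((i+1 : ℕ):ℝ)/T)
          ≤ (2 * (n:ℝ)) ^ (-(i:ℝ)/T) := by
        have e1 : (n:ℝ) ^ ((1:ℝ)/T) * (n:ℝ) ^ (-((i+1 : ℕ):ℝ)/T) = (n:ℝ) ^ (-(i:ℝ)/T) := by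
          rw [← Real.rpow_add hN0]
          congr 1
          push_cast
          field_simp
          ring
        rw [mul_assoc, e1, Real.mul_rpow (by norm_num) (le_of_lt hN0)]
        have h2 : (1:ℝ)/2 ≤ (2:ℝ) ^ (-(i:ℝ)/T) := by
          have : ((2:ℝ)) ^ (-1 : ℝ) ≤ (2:ℝ) ^ (-(i:ℝ)/T) := by
            apply Real.rpow_le_rpow_of_exponent_le (by norm_num)
            rw [neg_div, neg_le_neg_iff, div_le_one hT0]
            nlinarith [hT, (by exact_mod_cast him.le : (i:ℝ) ≤ (m:ℝ))]
          calc (1:ℝ)/2 = (2:ℝ) ^ (-1:ℝ) := by rw [Real.rpow_neg_one]; norm_num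
            _ ≤ _ := this
        have hnp : (0:ℝ) < (n:ℝ) ^ (-(i:ℝ)/T) := Real.rpow_pos_of_pos hN0 _
        nlinarith
      nlinarith [hpow, Real.rpow_pos_of_pos h2N (-(i:ℝ)/T)]
    · -- i = 0 term vs j = m term
      have hcast : ((2 * n : ℕ):ℝ) = 2 * (n:ℝ) := by push_cast; ring
      have hfe : 2 ^ m * (2 * n) = 2 ^ (m+1) * n := by ring
      rw [hcast, hfe]
      simp only [pow_zero, one_mul, Nat.cast_zero, neg_zero, zero_div, Real.rpow_zero]
      have hfn0 : (0:ℝ) ≤ f n := by linarith [hge1 n hn]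
      have hreg' : (n:ℝ) * f n ≤ f (2 ^ (m+1) * n) := hreg n hn
      have hbp : (0:ℝ) < (2 * (n:ℝ)) ^ (-(m:ℝ)/T) := Real.rpow_pos_of_pos h2N _
      have step : 1 / 2 * (n:ℝ) ^ ((1:ℝ)/T) ≤ (2 * (n:ℝ)) ^ (-(m:ℝ)/T) * (n:ℝ) := by
        have e1 : (2 * (n:ℝ)) ^ (-(m:ℝ)/T) * (2 * (n:ℝ)) = (2 * (n:ℝ)) ^ ((1:ℝ)/T) := by
          rw [← Real.rpow_add_one (ne_of_gt h2N)]
          congr 1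
          rw [hT]
          field_simp
          ring
        have e2 : (n:ℝ) ^ ((1:ℝ)/T) ≤ (2 * (n:ℝ)) ^ ((1:ℝ)/T) := by
          apply Real.rpow_le_rpow (le_of_lt hN0) (by linarith) (by positivity)
        nlinarith
      calc 1 / 2 * (n:ℝ) ^ ((1:ℝ)/T) * f n
          ≤ (2 * (n:ℝ)) ^ (-(m:ℝ)/T) * ((n:ℝ) * f n) := by nlinarith
        _ ≤ (2 * (n:ℝ)) ^ (-(m:ℝ)/T) * f (2 ^ (m+1) * n) := by nlinarith
  refine ⟨key, ?_⟩
  have pos : ∀ n : ℕ, 1 ≤ n → 0 < f' n := by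
    intro n hn
    rw [hf']
    apply Finset.sum_pos
    · intro i _
      have h1 : 1 ≤ 2 ^ i * n := Nat.one_le_iff_ne_zero.mpr (by positivity)
      have hN0 : (0:ℝ) < (n:ℝ) := by exact_mod_cast Nat.lt_of_lt_of_le Nat.zero_lt_one hn
      exact mul_pos (Real.rpow_pos_of_pos hN0 _) (by linarith [hge1 _ h1])
    · exact ⟨0, Finset.mem_range.mpr (by omega)⟩
  have h1 : Filter.Tendsto (fun n : ℕ => (1/2) * (n:ℝ) ^ ((1:ℝ)/(t:ℝ)))
      Filter.atTop Filter.atTop := by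
    apply Filter.Tendsto.const_mul_atTop (by norm_num : (0:ℝ) < 1/2)
    exact (tendsto_rpow_atTop (by positivity)).comp tendsto_natCast_atTop_atTop
  apply Filter.tendsto_atTop_mono' _ _ h1
  filter_upwards [Filter.eventually_ge_atTop 1] with n hn
  rw [le_div_iff₀ (pos n hn)]
  exact key n hn
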